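/- (Schauz's Combinatorial Nullstellensatz criterion) Let R be a commutative ring and A_1,...,A_n ⊂ R nonempty finite sets. The following are equivalent: (i) each A_i satisfies Condition (D) (pairwise differences of distinct elements are non-zero-divisors); (ii) for all f ∈ R[t_1,...,t_n] with deg_{t_i} f < #A_i for all i, if f vanishes at every point of A_1 × ... × A_n then f = 0. -/

import Mathlib

open MvPolynomial

private lemma univ_vanish {R : Type*} [CommRing R] :
    ∀ (S : Finset R), (∀ x ∈ S, ∀ y ∈ S, x ≠ y → (x - y) ∈ nonZeroDivisors R) →
    ∀ p : Polynomial R, p.natDegree < S.card → (∀ x ∈ S, p.eval x = 0) → p = 0 := by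
  classical
  rcases subsingleton_or_nontrivial R with hR | hR
  · intro S _ p _ _; exact Subsingleton.elim _ _
  intro S
  induction S using Finset.strongInduction with
  | _ S ih =>
    intro hS p hdeg hz
    rcases Finset.eq_empty_or_nonempty S with rfl | ⟨x, hx⟩
    · simp at hdeg
    · obtain ⟨q, hq⟩ := Polynomial.dvd_iff_isRoot.mpr (hz x hx)
      by_cases hq0 : q = 0
      · simp [hq, hq0]
      have h1 : p.natDegree = 1 + q.natDegree := by
        rw [hq, (Polynomial.monic_X_sub_C x).natDegree_mul' hq0,
          Polynomial.natDegree_X_sub_C]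
      have hcard : 1 ≤ S.card := Finset.card_pos.mpr ⟨x, hx⟩
      have hdq : q.natDegree < (S.erase x).card := by
        rw [Finset.card_erase_of_mem hx]; omega
      have hz' : ∀ y ∈ S.erase x, q.eval y = 0 := by
        intro y hy
        have hyS := Finset.mem_of_mem_erase hy
        have hyx : y ≠ x := Finset.ne_of_mem_erase hy
        have h2 : q.eval y * (y - x) = 0 := by
          have := hz y hyS
          rw [hq] at this
          simpa [mul_comm] using this
        exact mem_nonZeroDivisors_iff_right.mp (hS y hyS x hx hyx) _ h2
      have hzq : q = 0 :=
        ih (S.erase x) (Finset.erase_ssubset hx)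
          (fun a ha b hb hab =>
            hS a (Finset.mem_of_mem_erase ha) b (Finset.mem_of_mem_erase hb) hab)
          q hdq hz'
      rw [hq, hzq, mul_zero]

private lemma main_dir {R : Type*} [CommRing R] :
    ∀ (n : ℕ) (A : Fin n → Finset R),
    (∀ i, ∀ x ∈ A i, ∀ y ∈ A i, x ≠ y → (x - y) ∈ nonZeroDivisors R) →
    ∀ f : MvPolynomial (Fin n) R, (∀ i, f.degreeOf i < (A i).card) →
    (∀ a : Fin n → R, (∀ i, a i ∈ A i) → eval a f = 0) → f = 0 := by
  intro n
  induction n with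
  | zero =>
    intro A hD f hdeg hz
    obtain ⟨r, rfl⟩ := MvPolynomial.C_surjective (Fin 0) f
    have := hz (fun i => i.elim0) (fun i => i.elim0)
    simp only [eval_C] at this
    rw [this, map_zero]
  | succ n ih =>
    intro A hD f hdeg hz
    set g := finSuccEquiv R n f with hg
    have hcoeff : ∀ k, g.coeff k = 0 := by
      intro k
      apply ih (fun i => A i.succ) (fun i => hD i.succ)
      · intro i
        exact lt_of_le_of_lt (degreeOf_coeff_finSuccEquiv f i k) (hdeg i.succ)
      · intro b hb
        have hp : g.map (eval b) = 0 := by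
          apply univ_vanish (A 0) (hD 0)
          · calc (g.map (eval b)).natDegree ≤ g.natDegree :=
                  Polynomial.natDegree_map_le
              _ = degreeOf 0 f := natDegree_finSuccEquiv f
              _ < (A 0).card := hdeg 0
          · intro x hxA
            have hmem : ∀ i, (Fin.cons x b : Fin (n + 1) → R) i ∈ A i := by
              intro i
              refine Fin.cases ?_ ?_ i
              · simpa using hxA
              · intro j; simpa using hb j
            have := hz (Fin.cons x b) hmem
            rwa [eval_eq_eval_mv_eval'] at this
        have := congrArg (fun p => Polynomial.coeff p k) hp
        simpa [Polynomial.coeff_map] using this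
    have hg0 : g = 0 := Polynomial.ext fun k => by simp [hcoeff k]
    exact (finSuccEquiv R n).injective (by rw [map_zero]; exact hg0)

theorem stmt8 (R : Type*) [CommRing R] (n : ℕ)
    (A : Fin n → Finset R) (hA : ∀ i, (A i).Nonempty) :
    (∀ i, ∀ x ∈ A i, ∀ y ∈ A i, x ≠ y → (x - y) ∈ nonZeroDivisors R) ↔
      (∀ f : MvPolynomial (Fin n) R,
        (∀ i, f.degreeOf i < (A i).card) →
        (∀ a : Fin n → R, (∀ i, a i ∈ A i) → eval a f = 0) → f = 0) := by
  classical
  constructor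
  · intro hD f hdeg hz
    exact main_dir n A hD f hdeg hz
  · intro H i x hx y hy hxy
    by_contra hnz
    rw [mem_nonZeroDivisors_iff_right] at hnz
    push_neg at hnz
    obtain ⟨c, hc, hc0⟩ := hnz
    have hR : Nontrivial R := nontrivial_of_ne c 0 hc0
    set f : MvPolynomial (Fin n) R :=
      C c * ∏ a ∈ (A i).erase x, (X i - C a) with hf
    have hy' : y ∈ (A i).erase x := Finset.mem_erase.mpr ⟨fun h => hxy h.symm, hy⟩
    have hdeg : ∀ j, f.degreeOf j < (A j).card := by
      intro j
      have hbound : ∀ a : R, degreeOf j (X i - C a) ≤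
          (if j = i then 1 else 0) := by
        intro a
        rw [sub_eq_add_neg, ← map_neg C]
        refine le_trans (degreeOf_add_le _ _ _) ?_
        rw [degreeOf_C, degreeOf_X]
        rcases eq_or_ne j i with rfl | h
        · simp
        · simp [if_neg h]
      have h2 : f.degreeOf j ≤ ((A i).erase x).card * (if j = i then 1 else 0) := by
        refine le_trans (le_trans (degreeOf_C_mul_le _ _ _) (degreeOf_prod_le _ _ _)) ?_
        refine le_trans (Finset.sum_le_sum fun a _ => hbound a) ?_
        rw [Finset.sum_const, smul_eq_mul]
      rcases eq_or_ne j i with rfl | h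
      · have hcard : 1 ≤ (A j).card := Finset.card_pos.mpr ⟨x, hx⟩
        rw [if_pos rfl, mul_one, Finset.card_erase_of_mem hx] at h2
        omega
      · rw [if_neg h, mul_zero] at h2
        have : 1 ≤ (A j).card := Finset.card_pos.mpr (hA j)
        omega
    have hz : ∀ a : Fin n → R, (∀ j, a j ∈ A j) → eval a f = 0 := by
      intro a ha
      rw [hf, map_mul, map_prod, eval_C]
      rcases eq_or_ne (a i) x with hax | hax
      · rw [← Finset.mul_prod_erase _ _ hy']
        simp only [map_sub, eval_X, eval_C, hax]
        rw [← mul_assoc, hc, zero_mul]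
      · have hmem : a i ∈ (A i).erase x := Finset.mem_erase.mpr ⟨hax, ha i⟩
        rw [Finset.prod_eq_zero hmem (by simp), mul_zero]
    have hf0 : f = 0 := H f hdeg hz
    have hφ : (aeval (fun j : Fin n => if j = i then (Polynomial.X : Polynomial R)
        else 0)) f = Polynomial.C c *
        ∏ a ∈ (A i).erase x, (Polynomial.X - Polynomial.C a) := by
      rw [hf, map_mul, map_prod, aeval_C]
      simp [algebraMap_eq]
    rw [hf0, map_zero] at hφ
    have hmonic : (∏ a ∈ (A i).erase x,
        (Polynomial.X - Polynomial.C a) : Polynomial R).Monic :=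
      Polynomial.monic_prod_of_monic _ _ fun a _ => Polynomial.monic_X_sub_C a
    have hcf := congrArg (fun p => Polynomial.coeff p (∏ a ∈ (A i).erase x,
        (Polynomial.X - Polynomial.C a) : Polynomial R).natDegree) hφ
    simp only [Polynomial.coeff_zero, Polynomial.coeff_C_mul] at hcf
    rw [← Polynomial.leadingCoeff, hmonic.leadingCoeff, mul_one] at hcf
    exact hc0 hcf.symm
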